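/- Let N be a nonempty finite set of real numbers partitioned into L and R with |L| ≥ 1, and w < o reals. Suppose every i ∈ L satisfies |i - w| ≤ |i - o| (and hence |i - o| ≥ |w - o|/2). Then (1/|N|) Σ_{i∈N} |i - w| ≤ (1 + 2|R|/|L|) · (1/|N|) Σ_{i∈N} |i - o|. -/

import Mathlib

theorem stmt_10 (L R : Finset ℝ) (hdisj : Disjoint L R) (hL : 1 ≤ L.card)
    (w o : ℝ) (hwo : w < o)
    (hpref : ∀ i ∈ L, |i - w| ≤ |i - o|) :
    (1 / ((L ∪ R).card) : ℝ) * ∑ i ∈ L ∪ R, |i - w| ≤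
      (1 + 2 * R.card / L.card) *
        ((1 / ((L ∪ R).card) : ℝ) * ∑ i ∈ L ∪ R, |i - o|) := by
  have hLpos : (0:ℝ) < L.card := by exact_mod_cast hL
  set c : ℝ := 2 * R.card / L.card with hc
  have hc0 : 0 ≤ c := by positivity
  have hcL : c * L.card = 2 * R.card := by rw [hc]; field_simp
  have hsum : ∑ i ∈ L ∪ R, |i - w| ≤ (1 + c) * ∑ i ∈ L ∪ R, |i - o| := by
    rw [Finset.sum_union hdisj, Finset.sum_union hdisj]
    have hLle : ∑ i ∈ L, |i - w| ≤ ∑ i ∈ L, |i - o| := Finset.sum_le_sum hpref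
    have hRle : ∑ i ∈ R, |i - w| ≤ ∑ i ∈ R, |i - o| + R.card * (o - w) := by
      have : ∑ i ∈ R, |i - w| ≤ ∑ i ∈ R, (|i - o| + (o - w)) := by
        apply Finset.sum_le_sum
        intro i _
        calc |i - w| = |(i - o) + (o - w)| := by rw [show i - w = (i - o) + (o - w) from by ring]
          _ ≤ |i - o| + |o - w| := abs_add_le _ _
          _ = |i - o| + (o - w) := by rw [abs_of_pos (show (0:ℝ) < o - w by linarith)]
      rw [Finset.sum_add_distrib, Finset.sum_const, nsmul_eq_mul] at this
      linarith
    have hLlow : (L.card : ℝ) * ((o - w) / 2) ≤ ∑ i ∈ L, |i - o| := by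
      have h : ∀ i ∈ L, (o - w) / 2 ≤ |i - o| := by
        intro i hi
        have h1 := hpref i hi
        have h2 : o - w ≤ |o - i| + |i - w| := by
          have := abs_add_le (o - i) (i - w)
          have e : o - i + (i - w) = o - w := by ring
          rw [e] at this
          linarith [le_abs_self (o - w)]
        rw [abs_sub_comm o i] at h2
        linarith
      calc (L.card : ℝ) * ((o - w) / 2) = ∑ _i ∈ L, ((o - w) / 2) := by
            rw [Finset.sum_const, nsmul_eq_mul]
        _ ≤ ∑ i ∈ L, |i - o| := Finset.sum_le_sum h
    have hRo : 0 ≤ ∑ i ∈ R, |i - o| := Finset.sum_nonneg fun i _ => abs_nonneg _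
    nlinarith [mul_le_mul_of_nonneg_left hLlow hc0, mul_nonneg hc0 hRo]
  have hNpos : (0:ℝ) < ((L ∪ R).card : ℝ) := by
    have h1 : 1 ≤ (L ∪ R).card := le_trans hL (Finset.card_le_card Finset.subset_union_left)
    exact_mod_cast h1
  calc (1 / ((L ∪ R).card) : ℝ) * ∑ i ∈ L ∪ R, |i - w|
      ≤ (1 / ((L ∪ R).card) : ℝ) * ((1 + c) * ∑ i ∈ L ∪ R, |i - o|) :=
        mul_le_mul_of_nonneg_left hsum (by positivity)
    _ = (1 + c) * ((1 / ((L ∪ R).card) : ℝ) * ∑ i ∈ L ∪ R, |i - o|) := by ring
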